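/- Stability of the self-consistent equation: fix ℓ > 0 and κ > 0, let γ_a = c_ℓ² and γ_b = c_ℓ√(ℓ!κ) if ℓ ∈ ℕ (both 0 otherwise) for some real c_ℓ, and let γ_c ≥ 0. Fix z ∈ ℍ with η = Im z. Suppose 𝔰 ∈ ℍ satisfies 1/𝔰 + z + γ_a·𝔰/(1 + γ_b·𝔰) + γ_c·𝔰 = ω with |ω| ≤ η/2, and 𝔪 ∈ ℍ is the unique solution in ℍ of 1/𝔪 + z + γ_a·𝔪/(1 + γ_b·𝔪) + γ_c·𝔪 = 0. Then |𝔰 − 𝔪| ≤ 4|ω|/η². -/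

import Mathlib

open scoped Classical

noncomputable section

/-- Three-term Cauchy–Schwarz inequality for square roots. -/
lemma cs3_aux (a b c a' b' c' : ℝ) (ha : 0 ≤ a) (hb : 0 ≤ b) (hc : 0 ≤ c)
    (ha' : 0 ≤ a') (hb' : 0 ≤ b') (hc' : 0 ≤ c') :
    Real.sqrt (a*a') + Real.sqrt (b*b') + Real.sqrt (c*c') ≤
      Real.sqrt ((a+b+c)*(a'+b'+c')) := by
  obtain ⟨x, hx, rfl⟩ : ∃ x, 0 ≤ x ∧ x^2 = a := ⟨Real.sqrt a, Real.sqrt_nonneg a, Real.sq_sqrt ha⟩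
  obtain ⟨y, hy, rfl⟩ : ∃ x, 0 ≤ x ∧ x^2 = b := ⟨Real.sqrt b, Real.sqrt_nonneg b, Real.sq_sqrt hb⟩
  obtain ⟨w, hw, rfl⟩ : ∃ x, 0 ≤ x ∧ x^2 = c := ⟨Real.sqrt c, Real.sqrt_nonneg c, Real.sq_sqrt hc⟩
  obtain ⟨x', hx', rfl⟩ : ∃ t, 0 ≤ t ∧ t^2 = a' :=
    ⟨Real.sqrt a', Real.sqrt_nonneg a', Real.sq_sqrt ha'⟩
  obtain ⟨y', hy', rfl⟩ : ∃ t, 0 ≤ t ∧ t^2 = b' :=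
    ⟨Real.sqrt b', Real.sqrt_nonneg b', Real.sq_sqrt hb'⟩
  obtain ⟨w', hw', rfl⟩ : ∃ t, 0 ≤ t ∧ t^2 = c' :=
    ⟨Real.sqrt c', Real.sqrt_nonneg c', Real.sq_sqrt hc'⟩
  have h1 : Real.sqrt (x^2*x'^2) = x*x' := by
    rw [show x^2*x'^2 = (x*x')^2 by ring, Real.sqrt_sq (by positivity)]
  have h2 : Real.sqrt (y^2*y'^2) = y*y' := by
    rw [show y^2*y'^2 = (y*y')^2 by ring, Real.sqrt_sq (by positivity)]
  have h3 : Real.sqrt (w^2*w'^2) = w*w' := by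
    rw [show w^2*w'^2 = (w*w')^2 by ring, Real.sqrt_sq (by positivity)]
  rw [h1, h2, h3]
  have key : (x*x' + y*y' + w*w')^2 ≤ (x^2+y^2+w^2)*(x'^2+y'^2+w'^2) := by
    nlinarith [sq_nonneg (x*y' - y*x'), sq_nonneg (x*w' - w*x'), sq_nonneg (y*w' - w*y')]
  calc x*x' + y*y' + w*w' = Real.sqrt ((x*x'+y*y'+w*w')^2) := by
        rw [Real.sqrt_sq (by positivity)]
    _ ≤ _ := Real.sqrt_le_sqrt key

/-- Imaginary part of the self-consistent expression. -/
lemma im_eq_aux (γa γb γc : ℝ) (z 𝔰 ω : ℂ)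
    (heq : 1 / 𝔰 + z + (γa : ℂ) * 𝔰 / (1 + (γb : ℂ) * 𝔰) + (γc : ℂ) * 𝔰 = ω) :
    -𝔰.im / Complex.normSq 𝔰 + z.im + γa * 𝔰.im / Complex.normSq (1 + (γb:ℂ)*𝔰)
      + γc * 𝔰.im = ω.im := by
  have h := congrArg Complex.im heq
  simp only [Complex.add_im, Complex.div_im, Complex.mul_im, Complex.mul_re,
    Complex.one_im, Complex.one_re, Complex.ofReal_im, Complex.ofReal_re,
    Complex.normSq_apply, Complex.add_re] at h ⊢
  ring_nf at h ⊢
  linarith [h]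

set_option maxHeartbeats 1000000 in
/-- stability of the self-consistent equation, Proposition 9 of
Lu–Yau as quoted in Lemma 3.5 of the paper. If `𝔰 ∈ ℍ` approximately solves the
self-consistent equation, with error `ω` satisfying `|ω| ≤ η/2`, and `𝔪 ∈ ℍ` is
the unique exact solution, then `|𝔰 − 𝔪| ≤ 4|ω|/η²`. -/
theorem self_consistent_stability
    (ℓ κ : ℝ) (hℓ : 0 < ℓ) (hκ : 0 < κ)
    (cl : ℝ) (γa γb : ℝ)
    (hγint : ∀ m : ℕ, (m : ℝ) = ℓ →
      γa = cl ^ 2 ∧ γb = cl * Real.sqrt (Nat.factorial m * κ))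
    (hγnint : (¬ ∃ m : ℕ, (m : ℝ) = ℓ) → γa = 0 ∧ γb = 0)
    (γc : ℝ) (hγc : 0 ≤ γc)
    (z 𝔰 𝔪 ω : ℂ) (hz : 0 < z.im) (h𝔰 : 0 < 𝔰.im)
    (heq : 1 / 𝔰 + z + (γa : ℂ) * 𝔰 / (1 + (γb : ℂ) * 𝔰) + (γc : ℂ) * 𝔰 = ω)
    (hω : ‖ω‖ ≤ z.im / 2)
    (h𝔪 : 0 < 𝔪.im)
    (h𝔪eq : 1 / 𝔪 + z + (γa : ℂ) * 𝔪 / (1 + (γb : ℂ) * 𝔪) + (γc : ℂ) * 𝔪 = 0)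
    (h𝔪uniq : ∀ w : ℂ, 0 < w.im →
      1 / w + z + (γa : ℂ) * w / (1 + (γb : ℂ) * w) + (γc : ℂ) * w = 0 → w = 𝔪) :
    ‖𝔰 - 𝔪‖ ≤ 4 * ‖ω‖ / z.im ^ 2 := by
  -- γa is nonnegative
  have hγa : 0 ≤ γa := by
    by_cases h : ∃ m : ℕ, (m : ℝ) = ℓ
    · obtain ⟨m, hm⟩ := h
      rw [(hγint m hm).1]; positivity
    · rw [(hγnint h).1]
  have hs0 : 𝔰 ≠ 0 := fun h => by simp [h] at h𝔰
  have hm0 : 𝔪 ≠ 0 := fun h => by simp [h] at h𝔪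
  set η := z.im with hη
  set s := 𝔰.im with hsdef
  set m := 𝔪.im with hmdef
  -- the denominators 1 + γb·w are nonzero
  have hAne : ∀ w : ℂ, 0 < w.im → (1 + (γb:ℂ) * w) ≠ 0 := by
    intro w hw h
    have h1 := congrArg Complex.re h
    have h2 := congrArg Complex.im h
    simp [Complex.add_im, Complex.mul_im, Complex.add_re, Complex.mul_re] at h1 h2
    rcases h2 with h3 | h3
    · rw [h3] at h1; norm_num at h1
    · linarith
  have hA : (1 + (γb:ℂ) * 𝔰) ≠ 0 := hAne 𝔰 h𝔰
  have hB : (1 + (γb:ℂ) * 𝔪) ≠ 0 := hAne 𝔪 h𝔪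
  -- abbreviations for squared norms / absolute values
  set Ns := Complex.normSq 𝔰 with hNs
  set Nm := Complex.normSq 𝔪 with hNm
  set NA := Complex.normSq (1 + (γb:ℂ)*𝔰) with hNA
  set NB := Complex.normSq (1 + (γb:ℂ)*𝔪) with hNB
  set as := ‖𝔰‖ with has
  set am := ‖𝔪‖ with ham
  set aA := ‖(1 + (γb:ℂ)*𝔰)‖ with haA
  set aB := ‖(1 + (γb:ℂ)*𝔪)‖ with haB
  have hNspos : 0 < Ns := Complex.normSq_pos.2 hs0
  have hNmpos : 0 < Nm := Complex.normSq_pos.2 hm0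
  have hNApos : 0 < NA := Complex.normSq_pos.2 hA
  have hNBpos : 0 < NB := Complex.normSq_pos.2 hB
  have haspos : 0 < as := norm_pos_iff.2 hs0
  have hampos : 0 < am := norm_pos_iff.2 hm0
  have haApos : 0 < aA := norm_pos_iff.2 hA
  have haBpos : 0 < aB := norm_pos_iff.2 hB
  have hasq : as^2 = Ns := Complex.sq_norm 𝔰
  have hamq : am^2 = Nm := Complex.sq_norm 𝔪
  have haAq : aA^2 = NA := Complex.sq_norm _
  have haBq : aB^2 = NB := Complex.sq_norm _
  -- imaginary-part identities
  have hSim : -(s / Ns) + η + γa * s / NA + γc * s = ω.im := by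
    have h := im_eq_aux γa γb γc z 𝔰 ω heq
    rw [neg_div] at h; exact h
  have hMim : -(m / Nm) + η + γa * m / NB + γc * m = 0 := by
    have h := im_eq_aux γa γb γc z 𝔪 0 h𝔪eq
    rw [neg_div] at h; simpa using h
  have hωim : ω.im ≤ η / 2 := le_trans (Complex.im_le_norm ω) hω
  -- bounds |𝔰| ≤ 2/η, |𝔪| ≤ 1/η
  have hsim : s ≤ as := le_trans (le_abs_self _) (Complex.abs_im_le_norm 𝔰)
  have hmim : m ≤ am := le_trans (le_abs_self _) (Complex.abs_im_le_norm 𝔪)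
  have htermS : 0 ≤ γa * s / NA := by positivity
  have htermM : 0 ≤ γa * m / NB := by positivity
  have hsNs : η / 2 ≤ s / Ns := by
    linarith only [hSim, hωim, htermS, mul_nonneg hγc h𝔰.le]
  have hmNm : η ≤ m / Nm := by
    linarith only [hMim, htermM, mul_nonneg hγc h𝔪.le]
  have hasb : as ≤ 2 / η := by
    have h1 : η * Ns ≤ s * 2 := (div_le_div_iff₀ (by norm_num) hNspos).1 hsNs
    rw [le_div_iff₀ hz]
    nlinarith only [h1, hasq, hsim, haspos, hz]
  have hamb : am ≤ 1 / η := by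
    have h1 : η * Nm ≤ m := by
      rw [le_div_iff₀ hNmpos] at hmNm; linarith only [hmNm]
    rw [le_div_iff₀ hz]
    nlinarith only [h1, hamq, hmim, hampos, hz]
  -- lower bounds on 1/Ns and 1/Nm as sums of nonnegative pieces
  have hsne : s ≠ 0 := ne_of_gt h𝔰
  have hmne : m ≠ 0 := ne_of_gt h𝔪
  have hNsne : Ns ≠ 0 := ne_of_gt hNspos
  have hNmne : Nm ≠ 0 := ne_of_gt hNmpos
  have hNAne' : NA ≠ 0 := ne_of_gt hNApos
  have hNBne' : NB ≠ 0 := ne_of_gt hNBpos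
  have hP : η / (2*s) + γa / NA + γc ≤ 1 / Ns := by
    rw [← mul_le_mul_iff_of_pos_right h𝔰]
    have e1 : (η/(2*s) + γa/NA + γc) * s = η/2 + γa*s/NA + γc*s := by
      field_simp
    have e2 : (1/Ns) * s = s/Ns := by ring
    rw [e1, e2]; linarith
  have hQ : η / m + γa / NB + γc ≤ 1 / Nm := by
    rw [← mul_le_mul_iff_of_pos_right h𝔪]
    have e1 : (η/m + γa/NB + γc) * m = η + γa*m/NB + γc*m := by
      field_simp
    have e2 : (1/Nm) * m = m/Nm := by ring
    rw [e1, e2]; linarith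
  -- Cauchy–Schwarz step
  have hCS := cs3_aux (η/(2*s)) (γa/NA) γc (η/m) (γa/NB) γc
    (by positivity) (by positivity) hγc (by positivity) (by positivity) hγc
  have hsq1 : Real.sqrt (γc * γc) = γc := Real.sqrt_mul_self hγc
  have hsq2 : Real.sqrt (γa/NA * (γa/NB)) = γa / (aA * aB) := by
    rw [show γa/NA * (γa/NB) = (γa/(aA*aB))^2 by
      rw [← haAq, ← haBq]; field_simp]
    exact Real.sqrt_sq (by positivity)
  have hsq3 : η^2 / 2 ≤ Real.sqrt (η/(2*s) * (η/m)) := by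
    have hb : (η^2/2)^2 ≤ η/(2*s) * (η/m) := by
      rw [show η/(2*s) * (η/m) = η^2 / (2*s*m) by field_simp,
        le_div_iff₀ (by positivity)]
      have hsm : s * m ≤ (2/η) * (1/η) :=
        mul_le_mul (le_trans hsim hasb) (le_trans hmim hamb) h𝔪.le (by positivity)
      have : (2:ℝ)/η * (1/η) = 2/η^2 := by field_simp
      rw [this] at hsm
      rw [le_div_iff₀ (by positivity)] at hsm
      nlinarith only [mul_le_mul_of_nonneg_right hsm (sq_nonneg η)]
    calc η^2/2 = Real.sqrt ((η^2/2)^2) := (Real.sqrt_sq (by positivity)).symm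
      _ ≤ _ := Real.sqrt_le_sqrt hb
  have hsq4 : Real.sqrt ((η/(2*s) + γa/NA + γc) * (η/m + γa/NB + γc))
      ≤ 1 / (as * am) := by
    have hrw : (1:ℝ)/Ns * (1/Nm) = (1/(as*am))^2 := by
      rw [← hasq, ← hamq]; field_simp
    calc Real.sqrt ((η/(2*s) + γa/NA + γc) * (η/m + γa/NB + γc))
        ≤ Real.sqrt ((1/Ns) * (1/Nm)) := Real.sqrt_le_sqrt
          (mul_le_mul hP hQ (by positivity) (by positivity))
      _ = 1/(as*am) := by rw [hrw]; exact Real.sqrt_sq (by positivity)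
  have hLB : η^2/2 + γa/(aA*aB) + γc ≤ 1/(as*am) := by
    rw [hsq1, hsq2] at hCS
    linarith [hCS, hsq3, hsq4]
  -- the key algebraic identity
  have hkey : (𝔰 - 𝔪) * ((γc:ℂ) + (γa:ℂ) / ((1 + (γb:ℂ)*𝔰) * (1 + (γb:ℂ)*𝔪))
      - 1 / (𝔰 * 𝔪)) = ω := by
    have hA' : 1 + 𝔰 * (γb:ℂ) ≠ 0 := by rwa [mul_comm] at hA
    have hB' : 1 + 𝔪 * (γb:ℂ) ≠ 0 := by rwa [mul_comm] at hB
    field_simp at heq h𝔪eq ⊢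
    linear_combination (1 + (γb:ℂ)*𝔪) * 𝔪 * heq - (1 + (γb:ℂ)*𝔰) * 𝔰 * h𝔪eq
  -- lower bound on the multiplier
  set D := (γc:ℂ) + (γa:ℂ) / ((1 + (γb:ℂ)*𝔰) * (1 + (γb:ℂ)*𝔪)) - 1 / (𝔰 * 𝔪) with hD
  have habs1 : ‖(1 / (𝔰 * 𝔪))‖ = 1 / (as * am) := by
    rw [norm_div, norm_one, norm_mul]
  have habs2 : ‖((γc:ℂ) + (γa:ℂ) / ((1 + (γb:ℂ)*𝔰) * (1 + (γb:ℂ)*𝔪)))‖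
      ≤ γc + γa/(aA*aB) := by
    refine le_trans (norm_add_le _ _) ?_
    rw [norm_div, norm_mul, Complex.norm_real, Complex.norm_real,
      Real.norm_of_nonneg hγc, Real.norm_of_nonneg hγa]
  have hDlb : η^2/2 ≤ ‖D‖ := by
    have h1 : ‖(1/(𝔰*𝔪))‖
        - ‖((γc:ℂ) + (γa:ℂ) / ((1 + (γb:ℂ)*𝔰) * (1 + (γb:ℂ)*𝔪)))‖
        ≤ ‖D‖ := by
      rw [hD, show (γc:ℂ) + (γa:ℂ) / ((1 + (γb:ℂ)*𝔰) * (1 + (γb:ℂ)*𝔪)) - 1/(𝔰*𝔪)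
        = -(1/(𝔰*𝔪) - ((γc:ℂ) + (γa:ℂ) / ((1 + (γb:ℂ)*𝔰) * (1 + (γb:ℂ)*𝔪)))) by ring,
        norm_neg]
      exact norm_sub_norm_le _ _
    rw [habs1] at h1
    linarith [habs2, hLB, h1]
  -- conclude
  have habsω : ‖𝔰 - 𝔪‖ * ‖D‖ = ‖ω‖ := by
    rw [← norm_mul]; exact congrArg norm hkey
  rw [le_div_iff₀ (by positivity : (0:ℝ) < η^2)]
  have hmul := mul_le_mul_of_nonneg_left hDlb (norm_nonneg (𝔰 - 𝔪))
  linarith only [hmul, habsω, norm_nonneg ω]
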